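/- Let (p_n), (q_n) be sequences with 0 < q_n < p_n ≤ 1 for each n, lim_{n→∞} p_n^n = 1 and lim_{n→∞} q_n^n = 1 (so in particular p_n → 1, q_n → 1 and [n]_{p_n,q_n} → ∞). Then for every twice continuously differentiable function f : [0,1] → ℝ: lim_{n→∞} [n]_{p_n,q_n} · ( B_{n,p_n,q_n}(f; x) − f(x) ) = (x(1−x)/2) f''(x), uniformly for x ∈ [0,1]. -/

import Mathlib

open Finset Set

/-- The `(p,q)`-integer `[k]_{p,q} = (p^k - q^k)/(p - q)` (so `[0]_{p,q} = 0`). -/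
noncomputable def pqInt (p q : ℝ) (k : ℕ) : ℝ := (p ^ k - q ^ k) / (p - q)

/-- The `(p,q)`-factorial `[k]_{p,q}! = ∏_{j=1}^k [j]_{p,q}` (`[0]_{p,q}! = 1`). -/
noncomputable def pqFact (p q : ℝ) (k : ℕ) : ℝ := ∏ j ∈ Finset.range k, pqInt p q (j + 1)

/-- The `(p,q)`-binomial coefficient. -/
noncomputable def pqBinom (p q : ℝ) (n k : ℕ) : ℝ :=
  pqFact p q n / (pqFact p q k * pqFact p q (n - k))

/-- The `(p,q)`-Bernstein basis function
`P_{n,k}(p,q;x) = p^{k(k-1)/2} [n choose k]_{p,q} x^k ∏_{s=0}^{n-k-1} (p^s - q^s x)`. -/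
noncomputable def pqBern (p q : ℝ) (n k : ℕ) (x : ℝ) : ℝ :=
  p ^ (k * (k - 1) / 2) * pqBinom p q n k * x ^ k *
    ∏ s ∈ Finset.range (n - k), (p ^ s - q ^ s * x)

/-- The node `x_{n,k} = p^{n-k} [k]_{p,q} / [n]_{p,q}`. -/
noncomputable def pqNode (p q : ℝ) (n k : ℕ) : ℝ := p ^ (n - k) * pqInt p q k / pqInt p q n

/-- The `(p,q)`-power central moment
`B_{n,p,q}((t-a)^m_{p,q}; y) = p^{-n(n-1)/2} ∑_{k=0}^n (∏_{s=0}^{m-1}(p^s x_{n,k} - q^s a)) P_{n,k}(p,q;y)`. -/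
noncomputable def pqPowMoment (p q : ℝ) (n m : ℕ) (a y : ℝ) : ℝ :=
  (p ^ (n * (n - 1) / 2))⁻¹ *
    ∑ k ∈ Finset.range (n + 1),
      (∏ s ∈ Finset.range m, (p ^ s * pqNode p q n k - q ^ s * a)) * pqBern p q n k y

/-- The `m`-th absolute central moment
`B_{n,p,q}(|t-x|^m; x) = p^{-n(n-1)/2} ∑_{k=0}^n |x_{n,k} - x|^m P_{n,k}(p,q;x)`. -/
noncomputable def pqAbsMoment (p q : ℝ) (n m : ℕ) (x : ℝ) : ℝ :=
  (p ^ (n * (n - 1) / 2))⁻¹ *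
    ∑ k ∈ Finset.range (n + 1), |pqNode p q n k - x| ^ m * pqBern p q n k x

/-- The ordinary `m`-th central moment
`B_{n,p,q}((t-x)^m; x) = p^{-n(n-1)/2} ∑_{k=0}^n (x_{n,k} - x)^m P_{n,k}(p,q;x)`. -/
noncomputable def pqMoment (p q : ℝ) (n m : ℕ) (x : ℝ) : ℝ :=
  (p ^ (n * (n - 1) / 2))⁻¹ *
    ∑ k ∈ Finset.range (n + 1), (pqNode p q n k - x) ^ m * pqBern p q n k x

/-- The `(p,q)`-Bernstein operator `B_{n,p,q}(f;x)`. -/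
noncomputable def pqBernstein (p q : ℝ) (n : ℕ) (f : ℝ → ℝ) (x : ℝ) : ℝ :=
  (p ^ (n * (n - 1) / 2))⁻¹ *
    ∑ k ∈ Finset.range (n + 1), f (pqNode p q n k) * pqBern p q n k x

/-- The `r`-th order generalization `B^{[r]}_{n,p,q}(f;x)` where `f^{(i)}` is interpreted as
`iteratedDerivWithin i f (Set.Icc 0 1)`. -/
noncomputable def pqBernsteinR (p q : ℝ) (n r : ℕ) (f : ℝ → ℝ) (x : ℝ) : ℝ :=
  (p ^ (n * (n - 1) / 2))⁻¹ *
    ∑ k ∈ Finset.range (n + 1), pqBern p q n k x *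
      ∑ i ∈ Finset.range (r + 1),
        iteratedDerivWithin i f (Set.Icc 0 1) (pqNode p q n k) / (i.factorial : ℝ) *
          (x - pqNode p q n k) ^ i

/-- The modulus of continuity on `[0,1]`:
`ω(g; δ) = sup { |g u - g v| : u, v ∈ [0,1], |u - v| ≤ δ }`. -/
noncomputable def modulusOfContinuity (g : ℝ → ℝ) (δ : ℝ) : ℝ :=
  sSup {d : ℝ | ∃ u ∈ Set.Icc (0 : ℝ) 1, ∃ v ∈ Set.Icc (0 : ℝ) 1, |u - v| ≤ δ ∧ d = |g u - g v|}

open Filter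

section Basic
variable {q : ℝ}

lemma pqInt_geom (hq : q ≠ 1) (k : ℕ) : pqInt 1 q k = ∑ j ∈ Finset.range k, q ^ j := by
  rw [geom_sum_eq hq, pqInt]
  rw [div_eq_div_iff (by simpa using sub_ne_zero.2 (Ne.symm hq)) (sub_ne_zero.2 hq)]
  ring

lemma pqInt_zero' : pqInt 1 q 0 = 0 := by simp [pqInt]

lemma pqInt_nonneg (hq0 : 0 ≤ q) (hq : q < 1) (k : ℕ) : 0 ≤ pqInt 1 q k := by
  rw [pqInt_geom hq.ne]
  exact Finset.sum_nonneg fun j _ => pow_nonneg hq0 j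

lemma pqInt_pos (hq0 : 0 < q) (hq : q < 1) {k : ℕ} (hk : 0 < k) : 0 < pqInt 1 q k := by
  rw [pqInt_geom hq.ne]
  exact Finset.sum_pos (fun j _ => pow_pos hq0 j) (by simp [hk.ne'])

lemma pqInt_mono (hq0 : 0 ≤ q) (hq : q < 1) {k n : ℕ} (hk : k ≤ n) :
    pqInt 1 q k ≤ pqInt 1 q n := by
  rw [pqInt_geom hq.ne, pqInt_geom hq.ne]
  exact Finset.sum_le_sum_of_subset_of_nonneg (Finset.range_subset_range.2 hk)
    (fun j _ _ => pow_nonneg hq0 j)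

lemma pqInt_succ (hq : q ≠ 1) (k : ℕ) : pqInt 1 q (k + 1) = 1 + q * pqInt 1 q k := by
  rw [pqInt_geom hq, pqInt_geom hq, Finset.sum_range_succ', Finset.mul_sum]
  simp [pow_succ, mul_comm, add_comm]

lemma pqInt_split (hq : q ≠ 1) {j n : ℕ} (hj : j ≤ n) :
    pqInt 1 q (n + 1) = pqInt 1 q (j + 1) + q ^ (j + 1) * pqInt 1 q (n - j) := by
  rw [pqInt_geom hq, pqInt_geom hq, pqInt_geom hq, Finset.mul_sum]
  rw [← Finset.sum_range_add_sum_Ico _ (by omega : j + 1 ≤ n + 1)]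
  congr 1
  rw [Finset.sum_Ico_eq_sum_range]
  refine Finset.sum_congr (by congr 1; omega) fun i _ => ?_
  rw [← pow_add]

lemma pqFact_succ (k : ℕ) : pqFact 1 q (k + 1) = pqFact 1 q k * pqInt 1 q (k + 1) :=
  Finset.prod_range_succ _ _

lemma pqFact_pos (hq0 : 0 < q) (hq : q < 1) (k : ℕ) : 0 < pqFact 1 q k :=
  Finset.prod_pos fun j _ => pqInt_pos hq0 hq (Nat.succ_pos j)

lemma pqFact_zero : pqFact 1 q 0 = 1 := by simp [pqFact]

lemma pqBinom_zero (n : ℕ) (hq0 : 0 < q) (hq : q < 1) : pqBinom 1 q n 0 = 1 := by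
  rw [pqBinom, pqFact_zero]
  rw [Nat.sub_zero, one_mul, div_self (pqFact_pos hq0 hq n).ne']

lemma pqBinom_self (n : ℕ) (hq0 : 0 < q) (hq : q < 1) : pqBinom 1 q n n = 1 := by
  rw [pqBinom, Nat.sub_self, pqFact_zero, mul_one, div_self (pqFact_pos hq0 hq n).ne']

lemma pqBinom_nonneg (n k : ℕ) (hq0 : 0 < q) (hq : q < 1) : 0 ≤ pqBinom 1 q n k :=
  le_of_lt (div_pos (pqFact_pos hq0 hq n) (mul_pos (pqFact_pos hq0 hq k) (pqFact_pos hq0 hq _)))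

lemma pqBinom_pascal (hq0 : 0 < q) (hq : q < 1) {n j : ℕ} (hj : j + 1 ≤ n) :
    pqBinom 1 q (n + 1) (j + 1) =
      q ^ (j + 1) * pqBinom 1 q n (j + 1) + pqBinom 1 q n j := by
  have h1 : n + 1 - (j + 1) = n - j := by omega
  have h2 : n - (j + 1) = n - j - 1 := by omega
  have h3 : (n - j - 1) + 1 = n - j := by omega
  rw [pqBinom, pqBinom, pqBinom, h1, h2, pqFact_succ n]
  have e1 : pqFact 1 q (n - j) = pqFact 1 q (n - j - 1) * pqInt 1 q (n - j) := by
    rw [← h3, pqFact_succ, h3]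
  have e2 : pqFact 1 q (j + 1) = pqFact 1 q j * pqInt 1 q (j + 1) := pqFact_succ j
  have hsplit : pqInt 1 q (n + 1) = pqInt 1 q (j + 1) + q ^ (j + 1) * pqInt 1 q (n - j) :=
    pqInt_split hq.ne (by omega)
  have p1 := (pqFact_pos hq0 hq j).ne'
  have p2 := (pqFact_pos hq0 hq (n - j - 1)).ne'
  have p3 := (pqInt_pos hq0 hq (Nat.succ_pos j)).ne'
  have p4 : pqInt 1 q (n - j) ≠ 0 := (pqInt_pos hq0 hq (by omega)).ne'
  rw [e1, e2, hsplit]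
  field_simp
  ring

lemma pqInt_mul_binom (hq0 : 0 < q) (hq : q < 1) {n j : ℕ} (hj : j + 1 ≤ n) :
    pqInt 1 q (j + 1) * pqBinom 1 q n (j + 1) =
      pqInt 1 q n * pqBinom 1 q (n - 1) j := by
  obtain ⟨m, rfl⟩ : ∃ m, n = m + 1 := ⟨n - 1, by omega⟩
  have h1 : m + 1 - (j + 1) = m - j := by omega
  have h2 : m + 1 - 1 = m := by omega
  rw [pqBinom, pqBinom, h1, h2, pqFact_succ m, pqFact_succ j]
  have h3 : m - j = m - j := rfl
  have p1 := (pqFact_pos hq0 hq j).ne'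
  have p2 := (pqFact_pos hq0 hq (m - j)).ne'
  have p3 := (pqInt_pos hq0 hq (Nat.succ_pos j)).ne'
  have p4 := (pqInt_pos hq0 hq (Nat.succ_pos m)).ne'
  have p5 := (pqFact_pos hq0 hq m).ne'
  field_simp

end Basic

section Unity
variable {q : ℝ}

lemma pqBern_one (n k : ℕ) (x : ℝ) :
    pqBern 1 q n k x = pqBinom 1 q n k * x ^ k * ∏ s ∈ Finset.range (n - k), (1 - q ^ s * x) := by
  simp [pqBern]

lemma pqBern_nonneg (hq0 : 0 < q) (hq : q < 1) (n k : ℕ) {x : ℝ}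
    (hx : x ∈ Set.Icc (0:ℝ) 1) : 0 ≤ pqBern 1 q n k x := by
  rw [pqBern_one]
  obtain ⟨hx0, hx1⟩ := hx
  refine mul_nonneg (mul_nonneg (pqBinom_nonneg n k hq0 hq) (pow_nonneg hx0 k)) ?_
  refine Finset.prod_nonneg fun s _ => ?_
  have : q ^ s * x ≤ 1 := by
    calc q ^ s * x ≤ 1 * 1 := by
          apply mul_le_mul (pow_le_one₀ hq0.le hq.le) hx1 hx0 zero_le_one
      _ = 1 := one_mul 1
  linarith

lemma prod_shift (n : ℕ) (x : ℝ) :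
    ∏ s ∈ Finset.range (n + 1), (1 - q ^ s * x) =
      (1 - x) * ∏ s ∈ Finset.range n, (1 - q ^ s * (q * x)) := by
  rw [Finset.prod_range_succ']
  simp only [pow_zero, one_mul, pow_succ]
  rw [mul_comm]
  congr 1
  exact Finset.prod_congr rfl fun s _ => by ring_nf

lemma pqBern_sum (hq0 : 0 < q) (hq : q < 1) :
    ∀ (n : ℕ) (x : ℝ), ∑ k ∈ Finset.range (n + 1), pqBern 1 q n k x = 1 := by
  intro n
  induction n with
  | zero => intro x; simp [pqBern_one, pqBinom_zero 0 hq0 hq]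
  | succ n ih =>
    intro x
    rw [Finset.sum_range_succ, Finset.sum_range_succ']
    have top : pqBern 1 q (n+1) (n+1) x = x * pqBern 1 q n n x := by
      rw [pqBern_one, pqBern_one, pqBinom_self _ hq0 hq, pqBinom_self _ hq0 hq, Nat.sub_self,
        Nat.sub_self]
      simp [pow_succ]; ring
    have first : pqBern 1 q (n+1) 0 x = (1 - x) * pqBern 1 q n 0 (q * x) := by
      rw [pqBern_one, pqBern_one, pqBinom_zero _ hq0 hq, pqBinom_zero _ hq0 hq]
      simpa using prod_shift n x
    have mid : ∀ j ∈ Finset.range n, pqBern 1 q (n+1) (j+1) x =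
        (1 - x) * pqBern 1 q n (j+1) (q * x) + x * pqBern 1 q n j x := by
      intro j hj
      rw [Finset.mem_range] at hj
      rw [pqBern_one, pqBern_one, pqBern_one, pqBinom_pascal hq0 hq (by omega)]
      rw [show n + 1 - (j+1) = n - j from by omega, show n - j = n - (j+1) + 1 from by omega,
        prod_shift]
      ring
    rw [Finset.sum_congr rfl mid, Finset.sum_add_distrib, ← Finset.mul_sum, ← Finset.mul_sum,
      first, top]
    have hA : (∑ j ∈ Finset.range n, pqBern 1 q n (j+1) (q*x)) + pqBern 1 q n 0 (q*x) = 1 := by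
      rw [← Finset.sum_range_succ' (fun k => pqBern 1 q n k (q*x)) n]; exact ih (q*x)
    have hB : (∑ j ∈ Finset.range n, pqBern 1 q n j x) + pqBern 1 q n n x = 1 := by
      rw [← Finset.sum_range_succ]; exact ih x
    linear_combination (1-x) * hA + x * hB
end Unity

section Moments
variable {q : ℝ}

lemma pqReindex (hq0 : 0 < q) (hq : q < 1) (n : ℕ) (x : ℝ) (φ : ℕ → ℝ) :
    ∑ k ∈ Finset.range (n + 2), pqInt 1 q k * φ k * pqBern 1 q (n+1) k x =
      pqInt 1 q (n+1) * x * ∑ j ∈ Finset.range (n + 1), φ (j+1) * pqBern 1 q n j x := by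
  rw [Finset.sum_range_succ'
    (fun k => pqInt 1 q k * φ k * pqBern 1 q (n+1) k x) (n+1)]
  rw [pqInt_zero']
  simp only [zero_mul, add_zero]
  rw [Finset.mul_sum]
  refine Finset.sum_congr rfl fun j hj => ?_
  rw [Finset.mem_range] at hj
  rw [pqBern_one, pqBern_one]
  have key : pqInt 1 q (j + 1) * pqBinom 1 q (n+1) (j + 1) =
      pqInt 1 q (n+1) * pqBinom 1 q n j := by
    have := pqInt_mul_binom hq0 hq (n := n+1) (j := j) (by omega)
    simpa using this
  rw [show n + 1 - (j + 1) = n - j from by omega]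
  calc pqInt 1 q (j+1) * φ (j+1) * (pqBinom 1 q (n+1) (j+1) * x ^ (j+1) *
        ∏ s ∈ Finset.range (n - j), (1 - q ^ s * x))
      = (pqInt 1 q (j+1) * pqBinom 1 q (n+1) (j+1)) * (φ (j+1) * x ^ (j+1) *
        ∏ s ∈ Finset.range (n - j), (1 - q ^ s * x)) := by ring
    _ = _ := by rw [key, pow_succ]; ring

lemma pqF1 (hq0 : 0 < q) (hq : q < 1) (n : ℕ) (x : ℝ) :
    ∑ k ∈ Finset.range (n + 1), pqInt 1 q k * pqBern 1 q n k x = pqInt 1 q n * x := by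
  cases n with
  | zero => simp [pqInt_zero']
  | succ m =>
    have h := pqReindex hq0 hq m x (fun _ => 1)
    simp only [mul_one, one_mul] at h
    rw [h, pqBern_sum hq0 hq, mul_one]

lemma pqF2 (hq0 : 0 < q) (hq : q < 1) (n : ℕ) (x : ℝ) :
    ∑ k ∈ Finset.range (n + 1), (pqInt 1 q k) ^ 2 * pqBern 1 q n k x =
      pqInt 1 q n * x * (1 + q * pqInt 1 q (n-1) * x) := by
  cases n with
  | zero => simp [pqInt_zero']
  | succ m =>
    have h := pqReindex hq0 hq m x (fun k => pqInt 1 q k)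
    have e : ∀ k ∈ Finset.range (m + 2), (pqInt 1 q k)^2 * pqBern 1 q (m+1) k x =
        pqInt 1 q k * pqInt 1 q k * pqBern 1 q (m+1) k x := fun k _ => by ring
    rw [Finset.sum_congr rfl e, h]
    have e2 : ∀ j ∈ Finset.range (m+1), pqInt 1 q (j+1) * pqBern 1 q m j x =
        pqBern 1 q m j x + q * (pqInt 1 q j * pqBern 1 q m j x) := by
      intro j _; rw [pqInt_succ hq.ne]; ring
    rw [Finset.sum_congr rfl e2, Finset.sum_add_distrib, ← Finset.mul_sum,
      pqBern_sum hq0 hq, pqF1 hq0 hq, Nat.add_sub_cancel]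
    ring

lemma pqF3 (hq0 : 0 < q) (hq : q < 1) (n : ℕ) (x : ℝ) :
    ∑ k ∈ Finset.range (n + 1), (pqInt 1 q k) ^ 3 * pqBern 1 q n k x =
      pqInt 1 q n * x * (1 + (2*q + q^2) * pqInt 1 q (n-1) * x
        + q^3 * pqInt 1 q (n-1) * pqInt 1 q (n-2) * x^2) := by
  cases n with
  | zero => simp [pqInt_zero']
  | succ m =>
    have h := pqReindex hq0 hq m x (fun k => (pqInt 1 q k)^2)
    have e : ∀ k ∈ Finset.range (m + 2), (pqInt 1 q k)^3 * pqBern 1 q (m+1) k x =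
        pqInt 1 q k * (pqInt 1 q k)^2 * pqBern 1 q (m+1) k x := fun k _ => by ring
    rw [Finset.sum_congr rfl e, h]
    have e2 : ∀ j ∈ Finset.range (m+1), (pqInt 1 q (j+1))^2 * pqBern 1 q m j x =
        pqBern 1 q m j x + (2*q) * (pqInt 1 q j * pqBern 1 q m j x)
          + q^2 * ((pqInt 1 q j)^2 * pqBern 1 q m j x) := by
      intro j _; rw [pqInt_succ hq.ne]; ring
    rw [Finset.sum_congr rfl e2, Finset.sum_add_distrib, Finset.sum_add_distrib,
      ← Finset.mul_sum, ← Finset.mul_sum, pqBern_sum hq0 hq, pqF1 hq0 hq, pqF2 hq0 hq,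
      Nat.add_sub_cancel]
    rw [show m + 1 - 2 = m - 1 from by omega]
    ring

lemma pqF4 (hq0 : 0 < q) (hq : q < 1) (n : ℕ) (x : ℝ) :
    ∑ k ∈ Finset.range (n + 1), (pqInt 1 q k) ^ 4 * pqBern 1 q n k x =
      pqInt 1 q n * x * (1 + (3*q + 3*q^2 + q^3) * pqInt 1 q (n-1) * x
        + (3*q^3 + 2*q^4 + q^5) * pqInt 1 q (n-1) * pqInt 1 q (n-2) * x^2
        + q^6 * pqInt 1 q (n-1) * pqInt 1 q (n-2) * pqInt 1 q (n-3) * x^3) := by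
  cases n with
  | zero => simp [pqInt_zero']
  | succ m =>
    have h := pqReindex hq0 hq m x (fun k => (pqInt 1 q k)^3)
    have e : ∀ k ∈ Finset.range (m + 2), (pqInt 1 q k)^4 * pqBern 1 q (m+1) k x =
        pqInt 1 q k * (pqInt 1 q k)^3 * pqBern 1 q (m+1) k x := fun k _ => by ring
    rw [Finset.sum_congr rfl e, h]
    have e2 : ∀ j ∈ Finset.range (m+1), (pqInt 1 q (j+1))^3 * pqBern 1 q m j x =
        pqBern 1 q m j x + (3*q) * (pqInt 1 q j * pqBern 1 q m j x)
          + (3*q^2) * ((pqInt 1 q j)^2 * pqBern 1 q m j x)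
          + q^3 * ((pqInt 1 q j)^3 * pqBern 1 q m j x) := by
      intro j _; rw [pqInt_succ hq.ne]; ring
    rw [Finset.sum_congr rfl e2, Finset.sum_add_distrib, Finset.sum_add_distrib,
      Finset.sum_add_distrib, ← Finset.mul_sum, ← Finset.mul_sum, ← Finset.mul_sum,
      pqBern_sum hq0 hq, pqF1 hq0 hq, pqF2 hq0 hq, pqF3 hq0 hq, Nat.add_sub_cancel]
    have h2 : m + 1 - 2 = m - 1 := by omega
    have h3 : m + 1 - 3 = m - 2 := by omega
    rw [h2, h3]
    ring
end Moments

section CMoments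
variable {q : ℝ}

lemma pqNode_one (n k : ℕ) : pqNode 1 q n k = pqInt 1 q k / pqInt 1 q n := by
  simp [pqNode]

lemma pqNode_mem (hq0 : 0 < q) (hq : q < 1) {n k : ℕ} (hn : 0 < n) (hk : k ≤ n) :
    pqNode 1 q n k ∈ Set.Icc (0:ℝ) 1 := by
  rw [pqNode_one]
  have hA := pqInt_pos hq0 hq hn
  constructor
  · exact div_nonneg (pqInt_nonneg hq0.le hq k) hA.le
  · rw [div_le_one hA]; exact pqInt_mono hq0.le hq hk

lemma pqM1 (hq0 : 0 < q) (hq : q < 1) {n : ℕ} (hn : 0 < n) (x : ℝ) :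
    ∑ k ∈ Finset.range (n + 1), (pqNode 1 q n k - x) * pqBern 1 q n k x = 0 := by
  have hA := (pqInt_pos hq0 hq hn).ne'
  have e : ∀ k ∈ Finset.range (n+1), (pqNode 1 q n k - x) * pqBern 1 q n k x =
      (pqInt 1 q n)⁻¹ * (pqInt 1 q k * pqBern 1 q n k x) - x * pqBern 1 q n k x := by
    intro k _; rw [pqNode_one]; field_simp
  rw [Finset.sum_congr rfl e, Finset.sum_sub_distrib, ← Finset.mul_sum, ← Finset.mul_sum,
    pqF1 hq0 hq, pqBern_sum hq0 hq]
  field_simp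
  ring

lemma pqM2 (hq0 : 0 < q) (hq : q < 1) {n : ℕ} (hn : 0 < n) (x : ℝ) :
    ∑ k ∈ Finset.range (n + 1), (pqNode 1 q n k - x) ^ 2 * pqBern 1 q n k x =
      x * (1 - x) / pqInt 1 q n := by
  have hA := (pqInt_pos hq0 hq hn).ne'
  have e : ∀ k ∈ Finset.range (n+1), (pqNode 1 q n k - x) ^ 2 * pqBern 1 q n k x =
      ((pqInt 1 q n)⁻¹)^2 * ((pqInt 1 q k)^2 * pqBern 1 q n k x)
        - (2 * x * (pqInt 1 q n)⁻¹) * (pqInt 1 q k * pqBern 1 q n k x)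
        + x^2 * pqBern 1 q n k x := by
    intro k _; rw [pqNode_one]; field_simp; ring
  rw [Finset.sum_congr rfl e, Finset.sum_add_distrib, Finset.sum_sub_distrib,
    ← Finset.mul_sum, ← Finset.mul_sum, ← Finset.mul_sum,
    pqF1 hq0 hq, pqF2 hq0 hq, pqBern_sum hq0 hq]
  have hrel : pqInt 1 q n = 1 + q * pqInt 1 q (n-1) := by
    conv_lhs => rw [show n = (n-1) + 1 from by omega]
    exact pqInt_succ hq.ne (n-1)
  field_simp
  rw [hrel]
  ring

lemma pqM4 (hq0 : 0 < q) (hq : q < 1) {n : ℕ} (hn : 0 < n) (x : ℝ) :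
    pqInt 1 q n * ∑ k ∈ Finset.range (n + 1),
        (pqNode 1 q n k - x) ^ 4 * pqBern 1 q n k x =
      (1/(pqInt 1 q n)^2) * x
      + ((3*q+3*q^2+q^3) * pqInt 1 q (n-1) / (pqInt 1 q n)^2 - 4/(pqInt 1 q n)) * x^2
      + ((3*q^3+2*q^4+q^5) * pqInt 1 q (n-1) * pqInt 1 q (n-2) / (pqInt 1 q n)^2
          - 4*(2*q+q^2) * pqInt 1 q (n-1) / (pqInt 1 q n) + 6) * x^3
      + (q^6 * pqInt 1 q (n-1) * pqInt 1 q (n-2) * pqInt 1 q (n-3) / (pqInt 1 q n)^2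
          - 4*q^3 * pqInt 1 q (n-1) * pqInt 1 q (n-2) / (pqInt 1 q n)
          + 6*q*pqInt 1 q (n-1) - 3 * pqInt 1 q n) * x^4 := by
  have hA := (pqInt_pos hq0 hq hn).ne'
  have e : ∀ k ∈ Finset.range (n+1), (pqNode 1 q n k - x) ^ 4 * pqBern 1 q n k x =
      ((pqInt 1 q n)⁻¹)^4 * ((pqInt 1 q k)^4 * pqBern 1 q n k x)
        - (4 * x * ((pqInt 1 q n)⁻¹)^3) * ((pqInt 1 q k)^3 * pqBern 1 q n k x)
        + (6 * x^2 * ((pqInt 1 q n)⁻¹)^2) * ((pqInt 1 q k)^2 * pqBern 1 q n k x)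
        - (4 * x^3 * (pqInt 1 q n)⁻¹) * (pqInt 1 q k * pqBern 1 q n k x)
        + x^4 * pqBern 1 q n k x := by
    intro k _; rw [pqNode_one]; field_simp; ring
  rw [Finset.sum_congr rfl e, Finset.sum_add_distrib, Finset.sum_sub_distrib,
    Finset.sum_add_distrib, Finset.sum_sub_distrib,
    ← Finset.mul_sum, ← Finset.mul_sum, ← Finset.mul_sum, ← Finset.mul_sum, ← Finset.mul_sum,
    pqF1 hq0 hq, pqF2 hq0 hq, pqF3 hq0 hq, pqF4 hq0 hq, pqBern_sum hq0 hq]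
  field_simp
  ring
end CMoments

section Reduce
variable {p q : ℝ}

lemma tri_mul_two (m : ℕ) : m * (m - 1) / 2 * 2 = m * (m - 1) := by
  refine Nat.div_mul_cancel ?_
  rcases m with _ | k
  · simp
  · simpa [Nat.mul_comm] using (Nat.even_mul_succ_self k).two_dvd

lemma binom_exp {n k : ℕ} (hk : k ≤ n) :
    k * (k - 1) / 2 + k * (n - k) + (n - k) * (n - k - 1) / 2 = n * (n - 1) / 2 := by
  have hkey : ∀ a b : ℕ, a * (a - 1) + 2 * (a * b) + b * (b - 1) = (a + b) * (a + b - 1) := by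
    intro a b
    rcases a with _ | a
    · simp
    rcases b with _ | b
    · simp
    have : a + 1 + (b + 1) - 1 = a + b + 1 := by omega
    rw [this]
    simp only [Nat.add_sub_cancel]
    ring
  refine Nat.eq_of_mul_eq_mul_right two_pos ?_
  rw [add_mul, add_mul, tri_mul_two, tri_mul_two, tri_mul_two]
  have h := hkey k (n - k)
  rw [show k + (n - k) = n from by omega] at h
  omega

lemma tri_sum (m : ℕ) : m * (m - 1) / 2 = ∑ i ∈ Finset.range m, i := by
  refine Nat.eq_of_mul_eq_mul_right two_pos ?_
  rw [tri_mul_two, Finset.sum_range_id_mul_two]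

section
variable (hq0 : 0 < q) (hqp : q < p)
include hq0 hqp

lemma ht0 : 0 < q / p := div_pos hq0 (hq0.trans hqp)
lemma ht1 : q / p < 1 := (div_lt_one (hq0.trans hqp)).2 hqp

lemma pqInt_reduce (k : ℕ) : pqInt p q k = p ^ (k - 1) * pqInt 1 (q/p) k := by
  have hp0 : (0:ℝ) < p := hq0.trans hqp
  have hpq : p - q ≠ 0 := sub_ne_zero.2 (ne_of_gt hqp)
  have ht : 1 - q/p ≠ 0 := sub_ne_zero.2 (ne_of_gt (ht1 hq0 hqp))
  rcases k with _ | j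
  · simp [pqInt]
  · rw [pqInt, pqInt, Nat.add_sub_cancel]
    rw [one_pow, div_pow]
    field_simp
    ring

lemma pqFact_reduce (n : ℕ) : pqFact p q n = p ^ (n * (n - 1) / 2) * pqFact 1 (q/p) n := by
  rw [pqFact, pqFact, tri_sum]
  rw [← Finset.prod_pow_eq_pow_sum]
  rw [← Finset.prod_mul_distrib]
  exact Finset.prod_congr rfl fun j _ => by
    rw [pqInt_reduce hq0 hqp (j+1), Nat.add_sub_cancel]

lemma pqBinom_reduce {n k : ℕ} (hk : k ≤ n) :
    pqBinom p q n k = p ^ (k * (n - k)) * pqBinom 1 (q/p) n k := by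
  have hp0 : (0:ℝ) < p := hq0.trans hqp
  have h1 := pqFact_pos (ht0 hq0 hqp) (ht1 hq0 hqp) k
  have h2 := pqFact_pos (ht0 hq0 hqp) (ht1 hq0 hqp) (n - k)
  rw [pqBinom, pqBinom, pqFact_reduce hq0 hqp, pqFact_reduce hq0 hqp,
    pqFact_reduce hq0 hqp]
  rw [← binom_exp hk, pow_add, pow_add]
  field_simp

lemma prod_reduce (m : ℕ) (x : ℝ) :
    ∏ s ∈ Finset.range m, (p ^ s - q ^ s * x) =
      p ^ (m * (m - 1) / 2) * ∏ s ∈ Finset.range m, (1 - (q/p) ^ s * x) := by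
  have hp0 : (0:ℝ) < p := hq0.trans hqp
  rw [tri_sum, ← Finset.prod_pow_eq_pow_sum, ← Finset.prod_mul_distrib]
  refine Finset.prod_congr rfl fun s _ => ?_
  rw [div_pow]
  field_simp

lemma pqBern_reduce {n k : ℕ} (hk : k ≤ n) (x : ℝ) :
    pqBern p q n k x = p ^ (n * (n - 1) / 2) * pqBern 1 (q/p) n k x := by
  have hp0 : (0:ℝ) < p := hq0.trans hqp
  rw [pqBern, pqBern_one, pqBinom_reduce hq0 hqp hk, prod_reduce hq0 hqp (n - k) x]
  rw [← binom_exp hk, pow_add, pow_add]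
  ring

lemma pqNode_reduce {n k : ℕ} (hk : k ≤ n) :
    pqNode p q n k = pqNode 1 (q/p) n k := by
  have hp0 : (0:ℝ) < p := hq0.trans hqp
  rcases k with _ | j
  · simp [pqNode, pqInt]
  · have hn : 0 < n := by omega
    rw [pqNode, pqNode, pqInt_reduce hq0 hqp, pqInt_reduce hq0 hqp, Nat.add_sub_cancel]
    have hIn : pqInt 1 (q/p) n ≠ 0 := (pqInt_pos (ht0 hq0 hqp) (ht1 hq0 hqp) hn).ne'
    rw [one_pow]
    rw [show n - 1 = n - (j+1) + j from by omega, pow_add]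
    field_simp

lemma pqBernstein_reduce (n : ℕ) (f : ℝ → ℝ) (x : ℝ) :
    pqBernstein p q n f x = pqBernstein 1 (q/p) n f x := by
  have hp0 : (0:ℝ) < p := hq0.trans hqp
  rw [pqBernstein, pqBernstein]
  have e : ∀ k ∈ Finset.range (n+1), f (pqNode p q n k) * pqBern p q n k x =
      p ^ (n * (n - 1) / 2) * (f (pqNode 1 (q/p) n k) * pqBern 1 (q/p) n k x) := by
    intro k hkk
    rw [Finset.mem_range] at hkk
    rw [pqNode_reduce hq0 hqp (by omega), pqBern_reduce hq0 hqp (by omega)]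
    ring
  rw [Finset.sum_congr rfl e, ← Finset.mul_sum]
  rw [← mul_assoc, one_pow, inv_one, one_mul, inv_mul_cancel₀ (pow_ne_zero _ hp0.ne'), one_mul]
end
end Reduce

section Taylor
variable {f : ℝ → ℝ}

lemma taylor_aux (hf : ContDiffOn ℝ 2 f (Set.Icc 0 1)) {x t C : ℝ}
    (hx : x ∈ Set.Icc (0:ℝ) 1) (ht : t ∈ Set.Icc (0:ℝ) 1)
    (hC : ∀ y ∈ Set.uIcc x t,
      |iteratedDerivWithin 2 f (Set.Icc 0 1) y - iteratedDerivWithin 2 f (Set.Icc 0 1) x| ≤ C) :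
    |f t - (f x + derivWithin f (Set.Icc 0 1) x * (t - x)
        + iteratedDerivWithin 2 f (Set.Icc 0 1) x / 2 * (t - x) ^ 2)| ≤ C * (t - x) ^ 2 := by
  set I : Set ℝ := Set.Icc 0 1 with hI
  have hUD : UniqueDiffOn ℝ I := uniqueDiffOn_Icc zero_lt_one
  set fd : ℝ → ℝ := derivWithin f I with hfdDef
  set fdd : ℝ → ℝ := iteratedDerivWithin 2 f I with hfddDef
  have hfd : ContDiffOn ℝ 1 fd I := hf.derivWithin hUD (by norm_num)
  have hs : Set.uIcc x t ⊆ I := Set.uIcc_subset_Icc hx ht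
  have hfdd_eq : ∀ y ∈ I, fdd y = derivWithin fd I y := by
    intro y hy
    have heq : Set.EqOn (iteratedDerivWithin 1 f I) fd I := by
      intro z hz
      rw [iteratedDerivWithin_one]
    rw [hfddDef, show (2:ℕ) = 1 + 1 from rfl, iteratedDerivWithin_succ]
    exact derivWithin_congr heq (heq hy)
  -- derivative facts
  have hfdderiv : ∀ y ∈ Set.uIcc x t, HasDerivWithinAt f (fd y) (Set.uIcc x t) y := by
    intro y hy
    exact ((hf.differentiableOn (by norm_num) y (hs hy)).hasDerivWithinAt).mono hs
  have hfd2 : ∀ y ∈ Set.uIcc x t, HasDerivWithinAt fd (fdd y) (Set.uIcc x t) y := by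
    intro y hy
    have h1 : HasDerivWithinAt fd (derivWithin fd I y) I y :=
      (hfd.differentiableOn one_ne_zero y (hs hy)).hasDerivWithinAt
    rw [← hfdd_eq y (hs hy)] at h1
    exact h1.mono hs
  -- step 1 : bound g1
  set g1 : ℝ → ℝ := fun y => fd y - (fd x + fdd x * (y - x)) with hg1
  have hg1deriv : ∀ y ∈ Set.uIcc x t, HasDerivWithinAt g1 (fdd y - fdd x) (Set.uIcc x t) y := by
    intro y hy
    have h2 : HasDerivWithinAt (fun y => fd x + fdd x * (y - x)) (fdd x) (Set.uIcc x t) y := by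
      have := (((hasDerivWithinAt_id y (Set.uIcc x t)).sub_const x).const_mul (fdd x)).const_add
        (fd x)
      simpa using this
    exact (hfd2 y hy).sub h2
  have habs : ∀ y ∈ Set.uIcc x t, |y - x| ≤ |t - x| := by
    intro y hy
    rw [Set.mem_uIcc] at hy
    rw [abs_sub_le_iff]
    constructor <;>
      rcases hy with ⟨h1, h2⟩ | ⟨h1, h2⟩ <;>
      [skip; skip; skip; skip] <;>
      · have := le_abs_self (t - x); have := neg_abs_le (t - x); linarith
  have hg1bound : ∀ y ∈ Set.uIcc x t, ‖g1 y‖ ≤ C * |t - x| := by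
    intro y hy
    have h0 : g1 x = 0 := by simp [hg1]
    have := Convex.norm_image_sub_le_of_norm_hasDerivWithin_le hg1deriv
      (fun z hz => hC z hz) (convex_uIcc x t) Set.left_mem_uIcc hy
    rw [h0, sub_zero] at this
    have hC0 : 0 ≤ C := by simpa using hC x Set.left_mem_uIcc
    calc ‖g1 y‖ ≤ C * ‖y - x‖ := this
      _ ≤ C * |t - x| := by
          refine mul_le_mul_of_nonneg_left ?_ hC0
          rw [Real.norm_eq_abs]; exact habs y hy
  -- step 2 : bound g
  set g : ℝ → ℝ := fun y => f y - (f x + fd x * (y - x) + fdd x / 2 * (y - x) ^ 2) with hg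
  have hgderiv : ∀ y ∈ Set.uIcc x t, HasDerivWithinAt g (g1 y) (Set.uIcc x t) y := by
    intro y hy
    have h2 : HasDerivWithinAt (fun y => f x + fd x * (y - x) + fdd x / 2 * (y - x) ^ 2)
        (fd x + fdd x * (y - x)) (Set.uIcc x t) y := by
      have hlin := (((hasDerivWithinAt_id y (Set.uIcc x t)).sub_const x).const_mul (fd x)).const_add (f x)
      have hsq := (((hasDerivWithinAt_id y (Set.uIcc x t)).sub_const x).pow 2).const_mul (fdd x / 2)
      have := hlin.add hsq
      refine this.congr_deriv ?_
      simp only [id_eq]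
      norm_num
      ring
    exact (hfdderiv y hy).sub h2
  have h0 : g x = 0 := by simp [hg]
  have := Convex.norm_image_sub_le_of_norm_hasDerivWithin_le hgderiv hg1bound
    (convex_uIcc x t) Set.left_mem_uIcc Set.right_mem_uIcc
  rw [h0, sub_zero] at this
  calc |g t| ≤ C * |t - x| * ‖t - x‖ := this
    _ = C * (t - x) ^ 2 := by
        rw [Real.norm_eq_abs, mul_assoc, abs_mul_abs_self, ← pow_two]

end Taylor

section Core
variable {q : ℝ} {f : ℝ → ℝ}

/-- abbreviation for the 4th-moment coefficient bound -/
noncomputable def m4bound (q : ℝ) (n : ℕ) : ℝ :=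
  |1/(pqInt 1 q n)^2|
  + |(3*q+3*q^2+q^3) * pqInt 1 q (n-1) / (pqInt 1 q n)^2 - 4/(pqInt 1 q n)|
  + |(3*q^3+2*q^4+q^5) * pqInt 1 q (n-1) * pqInt 1 q (n-2) / (pqInt 1 q n)^2
      - 4*(2*q+q^2) * pqInt 1 q (n-1) / (pqInt 1 q n) + 6|
  + |q^6 * pqInt 1 q (n-1) * pqInt 1 q (n-2) * pqInt 1 q (n-3) / (pqInt 1 q n)^2
      - 4*q^3 * pqInt 1 q (n-1) * pqInt 1 q (n-2) / (pqInt 1 q n)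
      + 6*q*pqInt 1 q (n-1) - 3 * pqInt 1 q n|

lemma pqM4_le (hq0 : 0 < q) (hq : q < 1) {n : ℕ} (hn : 0 < n) {x : ℝ}
    (hx : x ∈ Set.Icc (0:ℝ) 1) :
    pqInt 1 q n * ∑ k ∈ Finset.range (n + 1),
        (pqNode 1 q n k - x) ^ 4 * pqBern 1 q n k x ≤ m4bound q n := by
  rw [pqM4 hq0 hq hn x, m4bound]
  obtain ⟨hx0, hx1⟩ := hx
  have hxp : ∀ j : ℕ, x ^ j ≤ 1 := fun j => pow_le_one₀ hx0 hx1
  have hxp0 : ∀ j : ℕ, 0 ≤ x ^ j := fun j => pow_nonneg hx0 j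
  have key : ∀ (G : ℝ) (j : ℕ), G * x ^ j ≤ |G| := by
    intro G j
    calc G * x ^ j ≤ |G| * x ^ j :=
          mul_le_mul_of_nonneg_right (le_abs_self G) (hxp0 j)
      _ ≤ |G| * 1 := mul_le_mul_of_nonneg_left (hxp j) (abs_nonneg G)
      _ = |G| := mul_one _
  have k1 := key (1/(pqInt 1 q n)^2) 1
  have k2 := key ((3*q+3*q^2+q^3) * pqInt 1 q (n-1) / (pqInt 1 q n)^2 - 4/(pqInt 1 q n)) 2
  have k3 := key ((3*q^3+2*q^4+q^5) * pqInt 1 q (n-1) * pqInt 1 q (n-2) / (pqInt 1 q n)^2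
      - 4*(2*q+q^2) * pqInt 1 q (n-1) / (pqInt 1 q n) + 6) 3
  have k4 := key (q^6 * pqInt 1 q (n-1) * pqInt 1 q (n-2) * pqInt 1 q (n-3) / (pqInt 1 q n)^2
      - 4*q^3 * pqInt 1 q (n-1) * pqInt 1 q (n-2) / (pqInt 1 q n)
      + 6*q*pqInt 1 q (n-1) - 3 * pqInt 1 q n) 4
  rw [pow_one] at k1
  linarith

lemma core_estimate (hq0 : 0 < q) (hq : q < 1) {n : ℕ} (hn : 0 < n)
    (hf : ContDiffOn ℝ 2 f (Set.Icc 0 1)) {x ε K : ℝ}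
    (hx : x ∈ Set.Icc (0:ℝ) 1) (hε : 0 ≤ ε) (hK : 0 ≤ K)
    (hg : ∀ t ∈ Set.Icc (0:ℝ) 1,
      |f t - (f x + derivWithin f (Set.Icc 0 1) x * (t - x)
        + iteratedDerivWithin 2 f (Set.Icc 0 1) x / 2 * (t - x) ^ 2)|
        ≤ ε * (t - x)^2 + K * (t - x)^4) :
    |pqInt 1 q n * (pqBernstein 1 q n f x - f x)
        - x * (1 - x) / 2 * iteratedDerivWithin 2 f (Set.Icc 0 1) x|
      ≤ ε + K * m4bound q n := by
  set A := pqInt 1 q n with hA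
  have hApos : 0 < A := pqInt_pos hq0 hq hn
  set fd := derivWithin f (Set.Icc 0 1)
  set fdd := iteratedDerivWithin 2 f (Set.Icc 0 1)
  set g : ℝ → ℝ := fun t => f t - (f x + fd x * (t - x) + fdd x / 2 * (t - x) ^ 2) with hgdef
  -- identity
  have hBern : pqBernstein 1 q n f x =
      ∑ k ∈ Finset.range (n+1), f (pqNode 1 q n k) * pqBern 1 q n k x := by
    rw [pqBernstein, one_pow, inv_one, one_mul]
  have hsplit : ∀ k ∈ Finset.range (n+1),
      f (pqNode 1 q n k) * pqBern 1 q n k x =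
        f x * pqBern 1 q n k x
        + fd x * ((pqNode 1 q n k - x) * pqBern 1 q n k x)
        + fdd x / 2 * ((pqNode 1 q n k - x)^2 * pqBern 1 q n k x)
        + g (pqNode 1 q n k) * pqBern 1 q n k x := by
    intro k _
    rw [hgdef]
    ring
  have hiden : pqBernstein 1 q n f x - f x =
      fdd x / 2 * (x * (1-x) / A)
        + ∑ k ∈ Finset.range (n+1), g (pqNode 1 q n k) * pqBern 1 q n k x := by
    rw [hBern, Finset.sum_congr rfl hsplit, Finset.sum_add_distrib, Finset.sum_add_distrib,
      Finset.sum_add_distrib, ← Finset.mul_sum, ← Finset.mul_sum, ← Finset.mul_sum,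
      pqBern_sum hq0 hq, pqM1 hq0 hq hn, pqM2 hq0 hq hn]
    ring
  have habs : |∑ k ∈ Finset.range (n+1), g (pqNode 1 q n k) * pqBern 1 q n k x|
      ≤ ε * (x*(1-x)/A) + K * ∑ k ∈ Finset.range (n+1),
          (pqNode 1 q n k - x)^4 * pqBern 1 q n k x := by
    calc |∑ k ∈ Finset.range (n+1), g (pqNode 1 q n k) * pqBern 1 q n k x|
        ≤ ∑ k ∈ Finset.range (n+1), |g (pqNode 1 q n k) * pqBern 1 q n k x| :=
          Finset.abs_sum_le_sum_abs _ _
      _ ≤ ∑ k ∈ Finset.range (n+1),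
            (ε * ((pqNode 1 q n k - x)^2 * pqBern 1 q n k x)
              + K * ((pqNode 1 q n k - x)^4 * pqBern 1 q n k x)) := by
          refine Finset.sum_le_sum fun k hk => ?_
          rw [Finset.mem_range] at hk
          have hb := pqBern_nonneg hq0 hq n k hx
          have hnode := pqNode_mem hq0 hq hn (by omega : k ≤ n)
          rw [abs_mul, abs_of_nonneg hb]
          calc |g (pqNode 1 q n k)| * pqBern 1 q n k x
              ≤ (ε * (pqNode 1 q n k - x)^2 + K * (pqNode 1 q n k - x)^4) * pqBern 1 q n k x :=
                mul_le_mul_of_nonneg_right (hg _ hnode) hb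
            _ = _ := by ring
      _ = _ := by
          rw [Finset.sum_add_distrib, ← Finset.mul_sum, ← Finset.mul_sum,
            pqM2 hq0 hq hn]
  -- assemble
  rw [hiden]
  have hM4 := pqM4_le hq0 hq hn hx
  set S := ∑ k ∈ Finset.range (n+1), g (pqNode 1 q n k) * pqBern 1 q n k x with hS
  set M4s := ∑ k ∈ Finset.range (n+1), (pqNode 1 q n k - x)^4 * pqBern 1 q n k x with hM4s
  have hx01 : x*(1-x) ≤ 1 := by nlinarith [hx.1, hx.2]
  have hre : A * (fdd x / 2 * (x * (1-x) / A) + S) - x*(1-x)/2*fdd x = A * S := by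
    field_simp
    ring
  rw [hre, abs_mul, abs_of_pos hApos]
  calc A * |S| ≤ A * (ε*(x*(1-x)/A) + K*M4s) := mul_le_mul_of_nonneg_left habs hApos.le
    _ = ε*(x*(1-x)) + K*(A*M4s) := by field_simp
    _ ≤ ε*1 + K*m4bound q n := by
        have h1 := mul_le_mul_of_nonneg_left hM4 hK
        have h2 : ε*(x*(1-x)) ≤ ε*1 := mul_le_mul_of_nonneg_left hx01 hε
        linarith
    _ = ε + K*m4bound q n := by ring
end Core

section Limits
variable {q : ℝ}

lemma pqInt_one_mul (hq : q ≠ 1) (n : ℕ) : pqInt 1 q n * (1 - q) = 1 - q ^ n := by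
  rw [pqInt, one_pow]
  exact div_mul_cancel₀ _ (sub_ne_zero.2 (Ne.symm hq))

lemma pqInt_step (hq : q ≠ 1) (m : ℕ) : pqInt 1 q (m + 1) = pqInt 1 q m + q ^ m := by
  rw [pqInt_geom hq, pqInt_geom hq, Finset.sum_range_succ]

lemma m4bound_eq (hq0 : 0 < q) (hq1 : q < 1) {n : ℕ} (hn : 3 ≤ n) :
    m4bound q n =
      |((pqInt 1 q n)⁻¹)^2|
      + |(3*q+3*q^2+q^3)*(1 - q^(n-1) * (pqInt 1 q n)⁻¹)*(pqInt 1 q n)⁻¹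
          - 4*(pqInt 1 q n)⁻¹|
      + |(3*q^3+2*q^4+q^5)*(1 - q^(n-1) * (pqInt 1 q n)⁻¹)
            *(1 - (q^(n-1)+q^(n-2)) * (pqInt 1 q n)⁻¹)
          - 4*(2*q+q^2)*(1 - q^(n-1) * (pqInt 1 q n)⁻¹) + 6|
      + |(1 - q^n)*(1-q)*(q^4+2*q^3+3*q^2-3)
          + (-(q^6*(q^(n-1) + (q^(n-1)+q^(n-2)) + (q^(n-1)+q^(n-2)+q^(n-3))))
              + 4*q^3*(q^(n-1) + (q^(n-1)+q^(n-2))) - 6*q*q^(n-1))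
          + (q^6*(q^(n-1)*(q^(n-1)+q^(n-2)) + q^(n-1)*(q^(n-1)+q^(n-2)+q^(n-3))
                + (q^(n-1)+q^(n-2))*(q^(n-1)+q^(n-2)+q^(n-3)))
              - 4*q^3*(q^(n-1)*(q^(n-1)+q^(n-2)))) * (pqInt 1 q n)⁻¹
          - q^6*(q^(n-1)*(q^(n-1)+q^(n-2))*(q^(n-1)+q^(n-2)+q^(n-3)))
              * ((pqInt 1 q n)⁻¹)^2| := by
  have hA : pqInt 1 q n ≠ 0 := (pqInt_pos hq0 hq1 (by omega)).ne'
  have hB : pqInt 1 q (n-1) = pqInt 1 q n - q^(n-1) := by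
    have := pqInt_step hq1.ne (n-1)
    rw [show n - 1 + 1 = n from by omega] at this
    linarith
  have hC : pqInt 1 q (n-2) = pqInt 1 q n - (q^(n-1) + q^(n-2)) := by
    have h1 := pqInt_step hq1.ne (n-2)
    rw [show n - 2 + 1 = n - 1 from by omega] at h1
    rw [hB] at h1
    linarith
  have hD : pqInt 1 q (n-3) = pqInt 1 q n - (q^(n-1) + q^(n-2) + q^(n-3)) := by
    have h1 := pqInt_step hq1.ne (n-3)
    rw [show n - 3 + 1 = n - 2 from by omega] at h1
    rw [hC] at h1
    linarith
  have hw := pqInt_one_mul hq1.ne n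
  rw [m4bound]
  congr 1
  congr 1
  congr 1
  · congr 1
    rw [one_div, inv_pow]
  · congr 1
    rw [hB]
    field_simp
  · congr 1
    rw [hB, hC]
    field_simp
  · congr 1
    rw [hB, hC, hD, ← hw]
    field_simp
    ring

lemma m4_tendsto (ts : ℕ → ℝ) (h0 : ∀ n, 0 < ts n) (h1 : ∀ n, ts n < 1)
    (htn : Filter.Tendsto (fun n => ts n ^ n) Filter.atTop (nhds 1)) :
    Filter.Tendsto (fun n => m4bound (ts n) n) Filter.atTop (nhds 0) := by
  -- ts n → 1
  have ht : Filter.Tendsto ts Filter.atTop (nhds 1) := by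
    refine tendsto_of_tendsto_of_tendsto_of_le_of_le' htn tendsto_const_nhds ?_ ?_
    · filter_upwards [Filter.eventually_ge_atTop 1] with n hn
      simpa using pow_le_pow_of_le_one (h0 n).le (h1 n).le hn
    · exact Filter.Eventually.of_forall fun n => (h1 n).le
  -- A n → ∞
  have hAlow : ∀ n : ℕ, (n:ℝ) * ts n ^ n ≤ pqInt 1 (ts n) n := by
    intro n
    rw [pqInt_geom (h1 n).ne]
    calc (n:ℝ) * ts n ^ n = ∑ _j ∈ Finset.range n, ts n ^ n := by
          rw [Finset.sum_const, Finset.card_range, nsmul_eq_mul]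
      _ ≤ ∑ j ∈ Finset.range n, ts n ^ j := by
          refine Finset.sum_le_sum fun j hj => ?_
          rw [Finset.mem_range] at hj
          exact pow_le_pow_of_le_one (h0 n).le (h1 n).le (by omega)
  have hA : Filter.Tendsto (fun n => pqInt 1 (ts n) n) Filter.atTop Filter.atTop := by
    refine tendsto_atTop_mono hAlow ?_
    exact Filter.Tendsto.atTop_mul_pos zero_lt_one tendsto_natCast_atTop_atTop htn
  have hu : Filter.Tendsto (fun n => (pqInt 1 (ts n) n)⁻¹) Filter.atTop (nhds 0) :=
    hA.inv_tendsto_atTop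
  -- powers
  have hpow : ∀ j : ℕ, Filter.Tendsto (fun n => ts n ^ (n - j)) Filter.atTop (nhds 1) := by
    intro j
    have hd : Filter.Tendsto (fun n => ts n ^ n / ts n ^ j) Filter.atTop (nhds 1) := by
      have := htn.div (ht.pow j) (by norm_num)
      simpa [Pi.div_def] using this
    refine hd.congr' ?_
    filter_upwards [Filter.eventually_ge_atTop j] with n hn
    rw [pow_sub₀ _ (h0 n).ne' hn, div_eq_mul_inv]
  have hw : Filter.Tendsto (fun n => 1 - ts n ^ n) Filter.atTop (nhds 0) := by
    simpa using htn.const_sub 1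
  -- continuous master function
  set Φ : ℝ×ℝ×ℝ×ℝ×ℝ×ℝ → ℝ := fun v =>
    |v.2.2.2.2.1^2|
    + |(3*v.1+3*v.1^2+v.1^3)*(1 - v.2.1*v.2.2.2.2.1)*v.2.2.2.2.1 - 4*v.2.2.2.2.1|
    + |(3*v.1^3+2*v.1^4+v.1^5)*(1 - v.2.1*v.2.2.2.2.1)*(1 - v.2.2.1*v.2.2.2.2.1)
        - 4*(2*v.1+v.1^2)*(1 - v.2.1*v.2.2.2.2.1) + 6|
    + |v.2.2.2.2.2*(1-v.1)*(v.1^4+2*v.1^3+3*v.1^2-3)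
        + (-(v.1^6*(v.2.1 + v.2.2.1 + v.2.2.2.1)) + 4*v.1^3*(v.2.1 + v.2.2.1) - 6*v.1*v.2.1)
        + (v.1^6*(v.2.1*v.2.2.1 + v.2.1*v.2.2.2.1 + v.2.2.1*v.2.2.2.1)
            - 4*v.1^3*(v.2.1*v.2.2.1)) * v.2.2.2.2.1
        - v.1^6*(v.2.1*v.2.2.1*v.2.2.2.1) * v.2.2.2.2.1^2| with hΦdef
  have hΦ : Continuous Φ := by
    apply Continuous.add
    apply Continuous.add
    apply Continuous.add
    all_goals
      refine Continuous.abs ?_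
      fun_prop
  have hvec : Filter.Tendsto
      (fun n => ((ts n, ts n^(n-1), ts n^(n-1)+ts n^(n-2),
        ts n^(n-1)+ts n^(n-2)+ts n^(n-3), (pqInt 1 (ts n) n)⁻¹, 1 - ts n^n) : ℝ×ℝ×ℝ×ℝ×ℝ×ℝ))
      Filter.atTop (nhds ((1, 1, 1+1, 1+1+1, 0, 0) : ℝ×ℝ×ℝ×ℝ×ℝ×ℝ)) := by
    exact ht.prodMk_nhds ((hpow 1).prodMk_nhds (((hpow 1).add (hpow 2)).prodMk_nhds
      ((((hpow 1).add (hpow 2)).add (hpow 3)).prodMk_nhds (hu.prodMk_nhds hw))))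
  have hcomp := (hΦ.tendsto _).comp hvec
  have hval : Φ ((1, 1, 1+1, 1+1+1, 0, 0) : ℝ×ℝ×ℝ×ℝ×ℝ×ℝ) = 0 := by
    rw [hΦdef]
    norm_num
  rw [hval] at hcomp
  refine hcomp.congr' ?_
  filter_upwards [Filter.eventually_ge_atTop 3] with n hn
  rw [Function.comp_apply, m4bound_eq (h0 n) (h1 n) hn, hΦdef]

end Limits

/-- the Voronovskaja-type theorem:
`[n](B_{n,p_n,q_n}(f;x) - f(x)) → x(1-x)f''(x)/2` uniformly on `[0,1]`. -/
theorem pq_bernstein_voronovskaja_limit (ps qs : ℕ → ℝ)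
    (hq : ∀ n, 0 < qs n) (hqp : ∀ n, qs n < ps n) (hp : ∀ n, ps n ≤ 1)
    (hpl : Filter.Tendsto (fun n => ps n ^ n) Filter.atTop (nhds 1))
    (hql : Filter.Tendsto (fun n => qs n ^ n) Filter.atTop (nhds 1))
    (f : ℝ → ℝ) (hf : ContDiffOn ℝ 2 f (Set.Icc 0 1)) :
    TendstoUniformlyOn
      (fun n x => pqInt (ps n) (qs n) n * (pqBernstein (ps n) (qs n) n f x - f x))
      (fun x => x * (1 - x) / 2 * iteratedDerivWithin 2 f (Set.Icc 0 1) x)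
      Filter.atTop (Set.Icc 0 1) := by
  have hp0 : ∀ n, 0 < ps n := fun n => (hq n).trans (hqp n)
  set ts : ℕ → ℝ := fun n => qs n / ps n with hts
  have ht0 : ∀ n, 0 < ts n := fun n => div_pos (hq n) (hp0 n)
  have ht1 : ∀ n, ts n < 1 := fun n => (div_lt_one (hp0 n)).2 (hqp n)
  have htn : Filter.Tendsto (fun n => ts n ^ n) Filter.atTop (nhds 1) := by
    have h := hql.div hpl one_ne_zero
    have h2 : Filter.Tendsto (fun n => qs n ^ n / ps n ^ n) Filter.atTop (nhds 1) := by
      simpa [Pi.div_def] using h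
    refine h2.congr fun n => ?_
    rw [hts, div_pow]
  have hm4 := m4_tendsto ts ht0 ht1 htn
  have hpn1 : Filter.Tendsto (fun n => ps n ^ (n-1)) Filter.atTop (nhds 1) := by
    refine tendsto_of_tendsto_of_tendsto_of_le_of_le' hpl tendsto_const_nhds ?_ ?_
    · exact Filter.Eventually.of_forall fun n =>
        pow_le_pow_of_le_one (hp0 n).le (hp n) (by omega)
    · exact Filter.Eventually.of_forall fun n => pow_le_one₀ (hp0 n).le (hp n)
  set fdd := iteratedDerivWithin 2 f (Set.Icc 0 1) with hfdddef
  have hUD : UniqueDiffOn ℝ (Set.Icc (0:ℝ) 1) := uniqueDiffOn_Icc zero_lt_one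
  have hcont : ContinuousOn fdd (Set.Icc 0 1) :=
    hf.continuousOn_iteratedDerivWithin le_rfl hUD
  obtain ⟨M, hM⟩ : ∃ M, ∀ y ∈ Set.Icc (0:ℝ) 1, |fdd y| ≤ M := by
    obtain ⟨M, hM⟩ := isCompact_Icc.exists_bound_of_continuousOn hcont
    exact ⟨M, fun y hy => by simpa using hM y hy⟩
  have hM0 : 0 ≤ M := le_trans (abs_nonneg _) (hM 0 ⟨le_refl 0, zero_le_one⟩)
  rw [Metric.tendstoUniformlyOn_iff]
  intro ε hε
  have hUC := isCompact_Icc.uniformContinuousOn_of_continuous hcont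
  rw [Metric.uniformContinuousOn_iff] at hUC
  obtain ⟨δ, hδ0, hδ⟩ := hUC (ε/4) (by positivity)
  set K := 2*M/δ^2 with hKdef
  have hK0 : 0 ≤ K := by positivity
  -- pointwise remainder bound
  have hg : ∀ x ∈ Set.Icc (0:ℝ) 1, ∀ t ∈ Set.Icc (0:ℝ) 1,
      |f t - (f x + derivWithin f (Set.Icc 0 1) x * (t - x) + fdd x/2*(t-x)^2)|
        ≤ (ε/4) * (t-x)^2 + K * (t-x)^4 := by
    intro x hx t ht
    have habs : ∀ y ∈ Set.uIcc x t, |y - x| ≤ |t - x| := by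
      intro y hy
      rw [Set.mem_uIcc] at hy
      rw [abs_sub_le_iff]
      constructor <;>
        rcases hy with ⟨h1, h2⟩ | ⟨h1, h2⟩ <;>
        · have := le_abs_self (t - x); have := neg_abs_le (t - x); linarith
    by_cases hcase : |t - x| < δ
    · have hb := taylor_aux hf hx ht (C := ε/4) ?_
      · have h4 : 0 ≤ K * (t-x)^4 := by positivity
        linarith
      · intro y hy
        have hyI : y ∈ Set.Icc (0:ℝ) 1 := Set.uIcc_subset_Icc hx ht hy
        have hd := hδ y hyI x hx (by
          rw [Real.dist_eq]
          exact lt_of_le_of_lt (habs y hy) hcase)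
        rw [Real.dist_eq] at hd
        exact hd.le
    · have hb := taylor_aux hf hx ht (C := 2*M) ?_
      · have hδ2 : δ^2 ≤ (t-x)^2 := by
          have h1 : δ ≤ |t - x| := not_lt.1 hcase
          calc δ^2 ≤ |t-x|^2 := by nlinarith [abs_nonneg (t-x)]
            _ = (t-x)^2 := sq_abs _
        have hfield : K * δ^2 = 2*M := by
          rw [hKdef]; field_simp
        have hkey : 2*M*(t-x)^2 ≤ K * (t-x)^4 := by
          nlinarith [mul_nonneg hK0 (mul_nonneg (sq_nonneg (t-x)) (sub_nonneg.2 hδ2)),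
            sq_nonneg (t-x)]
        have h5 : 0 ≤ (ε/4) * (t-x)^2 := by positivity
        linarith
      · intro y hy
        have hyI : y ∈ Set.Icc (0:ℝ) 1 := Set.uIcc_subset_Icc hx ht hy
        calc |fdd y - fdd x| ≤ |fdd y| + |fdd x| := abs_sub _ _
          _ ≤ 2*M := by have := hM y hyI; have := hM x hx; linarith
  -- eventual smallness
  have hev1 : ∀ᶠ n in Filter.atTop, K * m4bound (ts n) n < ε/4 := by
    have h := hm4.const_mul K
    rw [mul_zero] at h
    exact h.eventually (gt_mem_nhds (by positivity))
  have hev2 : ∀ᶠ n in Filter.atTop, (1 - ps n^(n-1)) * (M+1) < ε/4 := by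
    have h := (hpn1.const_sub 1).mul_const (M+1)
    rw [sub_self, zero_mul] at h
    exact h.eventually (gt_mem_nhds (by positivity))
  filter_upwards [hev1, hev2, Filter.eventually_ge_atTop 3] with n h1 h2 h3
  intro x hx
  rw [Real.dist_eq]
  have hred1 : pqInt (ps n) (qs n) n = ps n^(n-1) * pqInt 1 (ts n) n :=
    pqInt_reduce (hq n) (hqp n) n
  have hred2 : pqBernstein (ps n) (qs n) n f x = pqBernstein 1 (ts n) n f x :=
    pqBernstein_reduce (hq n) (hqp n) n f x
  have hcore := core_estimate (ht0 n) (ht1 n) (show 0 < n by omega) hf hx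
    (show (0:ℝ) ≤ ε/4 by positivity) hK0 (hg x hx)
  set A := pqInt 1 (ts n) n with hAdef
  set V := A * (pqBernstein 1 (ts n) n f x - f x) with hVdef
  set L := x*(1-x)/2 * fdd x with hLdef
  have hL : |L| ≤ M := by
    rw [hLdef, abs_mul]
    have h6 : |x*(1-x)/2| ≤ 1 := by
      rw [abs_le]; constructor <;> nlinarith [hx.1, hx.2]
    calc |x*(1-x)/2| * |fdd x| ≤ 1 * M :=
        mul_le_mul h6 (hM x hx) (abs_nonneg _) zero_le_one
      _ = M := one_mul M
  have hp1 : ps n^(n-1) ≤ 1 := pow_le_one₀ (hp0 n).le (hp n)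
  have hp2 : (0:ℝ) < ps n^(n-1) := pow_pos (hp0 n) _
  have hrw : pqInt (ps n) (qs n) n * (pqBernstein (ps n) (qs n) n f x - f x) =
      ps n^(n-1) * V := by
    rw [hred1, hred2, hVdef]; ring
  rw [hrw]
  have hdecomp : L - ps n^(n-1) * V = ps n^(n-1) * (L - V) + (1 - ps n^(n-1)) * L := by
    ring
  have hVL : |V - L| ≤ ε/4 + K * m4bound (ts n) n := hcore
  calc |L - ps n^(n-1) * V|
      ≤ ps n^(n-1) * |L - V| + (1 - ps n^(n-1)) * |L| := by
        rw [hdecomp]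
        refine le_trans (abs_add_le _ _) ?_
        rw [abs_mul, abs_mul, abs_of_pos hp2, abs_of_nonneg (by linarith : (0:ℝ) ≤ 1 - ps n^(n-1))]
    _ ≤ 1 * (ε/4 + K * m4bound (ts n) n) + (1 - ps n^(n-1)) * (M+1) := by
        have e1 : ps n^(n-1) * |L - V| ≤ 1 * (ε/4 + K * m4bound (ts n) n) := by
          rw [abs_sub_comm]
          refine mul_le_mul hp1 hVL (abs_nonneg _) zero_le_one
        have e2 : (1 - ps n^(n-1)) * |L| ≤ (1 - ps n^(n-1)) * (M+1) := by
          refine mul_le_mul_of_nonneg_left (by linarith) (by linarith)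
        linarith
    _ < ε := by
        rw [one_mul]
        linarith
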